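/- For all 1 ≤ i ≤ m and 1 ≤ j ≤ n, the group of units Z_{p^i q^j}^* is the disjoint union of D_0^{(p^i q^j)} and D_1^{(p^i q^j)}, and the group of units Z_{2p^i q^j}^* is the disjoint union of D_0^{(2p^i q^j)} and D_1^{(2p^i q^j)}. -/

import Mathlib

open Finset Polynomial

noncomputable section

/-- The field `F₄` with four elements. -/
abbrev F4 : Type := GaloisField 2 2

/-- Generic generalized cyclotomic class of index `0` modulo `M`:
`{ g^(2t) * y^k mod M : 0 ≤ t < dHalf, 0 ≤ k < e }`. -/
def GC0 (g y M dHalf e : ℕ) : Finset ℕ :=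
  ((Finset.range dHalf) ×ˢ (Finset.range e)).image
    (fun tk => g ^ (2 * tk.1) * y ^ tk.2 % M)

/-- Generic generalized cyclotomic class of index `1` modulo `M`: `g · GC0 (mod M)`. -/
def GC1 (g y M dHalf e : ℕ) : Finset ℕ :=
  (GC0 g y M dHalf e).image (fun x => g * x % M)

/-- Class of index `h ∈ {0,1}`. -/
def GC (h g y M dHalf e : ℕ) : Finset ℕ :=
  if h = 0 then GC0 g y M dHalf e else GC1 g y M dHalf e

/-- `e_{i,j} = gcd(p^{i-1}(p-1), q^{j-1}(q-1))`. -/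
def eij (p q i j : ℕ) : ℕ := Nat.gcd (p ^ (i - 1) * (p - 1)) (q ^ (j - 1) * (q - 1))

/-- `d_{i,j} = p^{i-1}(p-1) q^{j-1}(q-1) / e_{i,j}`. -/
def dij (p q i j : ℕ) : ℕ := p ^ (i - 1) * (p - 1) * (q ^ (j - 1) * (q - 1)) / eij p q i j

/-- `D_h^{(p^i q^j)}`. -/
def DPQ (p q g y h i j : ℕ) : Finset ℕ :=
  GC h g y (p ^ i * q ^ j) (dij p q i j / 2) (eij p q i j)

/-- `D_h^{(2 p^i q^j)}`. -/
def D2PQ (p q g y h i j : ℕ) : Finset ℕ :=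
  GC h g y (2 * (p ^ i * q ^ j)) (dij p q i j / 2) (eij p q i j)

/-- `D_h^{(p^i)}`. -/
def DP (p g h i : ℕ) : Finset ℕ := GC h g 1 (p ^ i) (p ^ (i - 1) * (p - 1) / 2) 1

/-- `D_h^{(2p^i)}`. -/
def D2P (p g h i : ℕ) : Finset ℕ := GC h g 1 (2 * p ^ i) (p ^ (i - 1) * (p - 1) / 2) 1

/-- `D_h^{(q^j)}`. -/
def DQ (q g h j : ℕ) : Finset ℕ := GC h g 1 (q ^ j) (q ^ (j - 1) * (q - 1) / 2) 1

/-- `D_h^{(2q^j)}`. -/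
def D2Q (q g h j : ℕ) : Finset ℕ := GC h g 1 (2 * q ^ j) (q ^ (j - 1) * (q - 1) / 2) 1

/-- `c · A`. -/
def scaled (c : ℕ) (A : Finset ℕ) : Finset ℕ := A.image (fun x => c * x)

/-- `H_h^{(p^i q^j)} = p^{m-i} q^{n-j} D_h^{(p^i q^j)}`. -/
def HPQ (p q m n g y h i j : ℕ) : Finset ℕ :=
  scaled (p ^ (m - i) * q ^ (n - j)) (DPQ p q g y h i j)

/-- `H_h^{(2 p^i q^j)} = p^{m-i} q^{n-j} D_h^{(2 p^i q^j)}`. -/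
def H2PQ (p q m n g y h i j : ℕ) : Finset ℕ :=
  scaled (p ^ (m - i) * q ^ (n - j)) (D2PQ p q g y h i j)

/-- `H_h^{(p^i)} = p^{m-i} q^n D_h^{(p^i)}`. -/
def HP (p q m n g h i : ℕ) : Finset ℕ := scaled (p ^ (m - i) * q ^ n) (DP p g h i)

/-- `H_h^{(2p^i)} = p^{m-i} q^n D_h^{(2p^i)}`. -/
def H2P (p q m n g h i : ℕ) : Finset ℕ := scaled (p ^ (m - i) * q ^ n) (D2P p g h i)

/-- `H_h^{(q^j)} = p^m q^{n-j} D_h^{(q^j)}`. -/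
def HQ (p q m n g h j : ℕ) : Finset ℕ := scaled (p ^ m * q ^ (n - j)) (DQ q g h j)

/-- `H_h^{(2q^j)} = p^m q^{n-j} D_h^{(2q^j)}`. -/
def H2Q (p q m n g h j : ℕ) : Finset ℕ := scaled (p ^ m * q ^ (n - j)) (D2Q q g h j)

/-- `⋃_{i,j} H_h^{(2p^i q^j)} ∪ ⋃_i H_h^{(2p^i)} ∪ ⋃_j H_h^{(2q^j)}`. -/
def UnionH (p q m n g y h : ℕ) : Finset ℕ :=
  ((Finset.Icc 1 m).biUnion fun i => (Finset.Icc 1 n).biUnion fun j => H2PQ p q m n g y h i j)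
    ∪ ((Finset.Icc 1 m).biUnion fun i => H2P p q m n g h i)
    ∪ ((Finset.Icc 1 n).biUnion fun j => H2Q p q m n g h j)

/-- `⋃_{i,j} 2H_h^{(p^i q^j)} ∪ ⋃_i 2H_h^{(p^i)} ∪ ⋃_j 2H_h^{(q^j)}`. -/
def Union2H (p q m n g y h : ℕ) : Finset ℕ :=
  ((Finset.Icc 1 m).biUnion fun i =>
      (Finset.Icc 1 n).biUnion fun j => scaled 2 (HPQ p q m n g y h i j))
    ∪ ((Finset.Icc 1 m).biUnion fun i => scaled 2 (HP p q m n g h i))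
    ∪ ((Finset.Icc 1 n).biUnion fun j => scaled 2 (HQ p q m n g h j))

/-- The quaternary generalized cyclotomic sequence of period `2 p^m q^n`. -/
def seqS (p q m n g y : ℕ) (a b c d e : F4) (u : ℕ) : F4 :=
  let v := u % (2 * (p ^ m * q ^ n))
  if v = 0 then 0
  else if v = p ^ m * q ^ n then e
  else if v ∈ UnionH p q m n g y 0 then a
  else if v ∈ UnionH p q m n g y 1 then b
  else if v ∈ Union2H p q m n g y 0 then c
  else if v ∈ Union2H p q m n g y 1 then d
  else 0

/-- The generating polynomial `S(x) = ∑_{u=0}^{2p^m q^n - 1} s_u x^u ∈ F₄[x]`. -/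
def genPoly (p q m n g y : ℕ) (a b c d e : F4) : Polynomial F4 :=
  ∑ u ∈ Finset.range (2 * (p ^ m * q ^ n)),
    Polynomial.C (seqS p q m n g y a b c d e u) * Polynomial.X ^ u

/-- The linear complexity of a sequence over a field: the least `L > 0` admitting a linear
recurrence `s_{u+L} = c_1 s_{u+L-1} + ⋯ + c_L s_u`. -/
def LinearComplexity {F : Type*} [Field F] (s : ℕ → F) : ℕ :=
  sInf {L | 0 < L ∧ ∃ c : Fin L → F,
    ∀ u, s (u + L) = ∑ i : Fin L, c i * s (u + L - 1 - (i : ℕ))}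

private lemma uniq_aux {A B s s' k k' : ℕ}
    (hs : s < Nat.lcm A B) (hs' : s' < Nat.lcm A B)
    (hk : k < Nat.gcd A B) (hk' : k' < Nat.gcd A B)
    (h1 : s + k ≡ s' + k' [MOD A]) (h2 : s ≡ s' [MOD B]) : s = s' ∧ k = k' := by
  have h2e : s ≡ s' [MOD Nat.gcd A B] := h2.of_dvd (Nat.gcd_dvd_right A B)
  have h1e : s + k ≡ s' + k' [MOD Nat.gcd A B] := h1.of_dvd (Nat.gcd_dvd_left A B)
  have hkk : k ≡ k' [MOD Nat.gcd A B] := h2e.add_left_cancel h1e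
  have hkeq : k = k' := by
    rwa [Nat.ModEq, Nat.mod_eq_of_lt hk, Nat.mod_eq_of_lt hk'] at hkk
  subst hkeq
  have hsA : s ≡ s' [MOD A] := Nat.ModEq.add_right_cancel' k h1
  have hdvd : ((Nat.lcm A B : ℕ) : ℤ) ∣ (s' : ℤ) - (s : ℤ) := by
    rw [← Int.lcm_natCast_natCast]
    exact Int.coe_lcm_dvd (Nat.modEq_iff_dvd.mp hsA) (Nat.modEq_iff_dvd.mp h2)
  have hsl : s ≡ s' [MOD Nat.lcm A B] := Nat.modEq_iff_dvd.mpr hdvd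
  have hseq : s = s' := by
    rwa [Nat.ModEq, Nat.mod_eq_of_lt hs, Nat.mod_eq_of_lt hs'] at hsl
  exact ⟨hseq, rfl⟩

theorem statement18
    (p q m n g y : ℕ)
    (hp : p.Prime) (hq : q.Prime) (hpq : p ≠ q) (hpodd : Odd p) (hqodd : Odd q)
    (hm : 1 ≤ m) (hn : 1 ≤ n) (hgodd : Odd g)
    (hgp : ∀ i, 1 ≤ i → i ≤ m → orderOf (g : ZMod (p ^ i)) = Nat.totient (p ^ i))
    (hg2p : ∀ i, 1 ≤ i → i ≤ m → orderOf (g : ZMod (2 * p ^ i)) = Nat.totient (2 * p ^ i))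
    (hgq : ∀ j, 1 ≤ j → j ≤ n → orderOf (g : ZMod (q ^ j)) = Nat.totient (q ^ j))
    (hg2q : ∀ j, 1 ≤ j → j ≤ n → orderOf (g : ZMod (2 * q ^ j)) = Nat.totient (2 * q ^ j))
    (hylt : y < 2 * (p ^ m * q ^ n))
    (hyg : y ≡ g [MOD 2 * p ^ m]) (hy1 : y ≡ 1 [MOD 2 * q ^ n])
    : ∀ i j, 1 ≤ i → i ≤ m → 1 ≤ j → j ≤ n →
      (DPQ p q g y 0 i j ∪ DPQ p q g y 1 i j
          = (Finset.range (p ^ i * q ^ j)).filter (fun t => Nat.Coprime t (p ^ i * q ^ j)) ∧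
        Disjoint (DPQ p q g y 0 i j) (DPQ p q g y 1 i j)) ∧
      (D2PQ p q g y 0 i j ∪ D2PQ p q g y 1 i j
          = (Finset.range (2 * (p ^ i * q ^ j))).filter
              (fun t => Nat.Coprime t (2 * (p ^ i * q ^ j))) ∧
        Disjoint (D2PQ p q g y 0 i j) (D2PQ p q g y 1 i j)) := by
  intro i j hi1 him hj1 hjn
  have hp2 : 2 ≤ p := hp.two_le
  have hq2 : 2 ≤ q := hq.two_le
  set A := p ^ (i - 1) * (p - 1) with hAdef
  set B := q ^ (j - 1) * (q - 1) with hBdef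
  have hA0 : 0 < A := Nat.mul_pos (pow_pos (by omega) _) (by omega)
  have hB0 : 0 < B := Nat.mul_pos (pow_pos (by omega) _) (by omega)
  have hAeven : 2 ∣ A := by
    obtain ⟨c, hc⟩ := hpodd
    exact Dvd.dvd.mul_left ⟨c, by omega⟩ _
  -- totient and order facts
  have htp : Nat.totient (p ^ i) = A := Nat.totient_prime_pow hp (by omega)
  have htq : Nat.totient (q ^ j) = B := Nat.totient_prime_pow hq (by omega)
  have hop : orderOf (g : ZMod (p ^ i)) = A := (hgp i hi1 him).trans htp
  have hoq : orderOf (g : ZMod (q ^ j)) = B := (hgq j hj1 hjn).trans htq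
  -- y congruences
  have hypmod : y ≡ g [MOD p ^ i] :=
    hyg.of_dvd (Dvd.dvd.mul_left (pow_dvd_pow p him) 2)
  have hyqmod : y ≡ 1 [MOD q ^ j] :=
    hy1.of_dvd (Dvd.dvd.mul_left (pow_dvd_pow q hjn) 2)
  have hyp : (y : ZMod (p ^ i)) = (g : ZMod (p ^ i)) :=
    (ZMod.natCast_eq_natCast_iff _ _ _).mpr hypmod
  have hyq : (y : ZMod (q ^ j)) = 1 := by
    have := (ZMod.natCast_eq_natCast_iff y 1 (q ^ j)).mpr hyqmod
    simpa using this
  -- g is a unit mod p^i and q^j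
  have hgApow : (g : ZMod (p ^ i)) ^ A = 1 := by rw [← hop]; exact pow_orderOf_eq_one _
  have hgBpow : (g : ZMod (q ^ j)) ^ B = 1 := by rw [← hoq]; exact pow_orderOf_eq_one _
  have hup : IsUnit (g : ZMod (p ^ i)) := by
    refine IsUnit.of_mul_eq_one ((g : ZMod (p ^ i)) ^ (A - 1)) ?_
    rw [← pow_succ', Nat.sub_add_cancel hA0, hgApow]
  have huq : IsUnit (g : ZMod (q ^ j)) := by
    refine IsUnit.of_mul_eq_one ((g : ZMod (q ^ j)) ^ (B - 1)) ?_
    rw [← pow_succ', Nat.sub_add_cancel hB0, hgBpow]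
  -- coprimality facts
  have hgP : Nat.Coprime g (p ^ i) := (ZMod.isUnit_iff_coprime g (p ^ i)).mp hup
  have hgQ : Nat.Coprime g (q ^ j) := (ZMod.isUnit_iff_coprime g (q ^ j)).mp huq
  have hyP : Nat.Coprime y (p ^ i) :=
    (ZMod.isUnit_iff_coprime y (p ^ i)).mp (by rw [hyp]; exact hup)
  have hyQ : Nat.Coprime y (q ^ j) :=
    (ZMod.isUnit_iff_coprime y (q ^ j)).mp (by rw [hyq]; exact isUnit_one)
  have hyodd : Odd y := by
    have h2 : y % 2 = g % 2 := hyg.of_dvd ⟨p ^ m, rfl⟩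
    have hg2 : g % 2 = 1 := Nat.odd_iff.mp hgodd
    rw [Nat.odd_iff]
    omega
  -- key injectivity
  have keyinj : ∀ N : ℕ, p ^ i ∣ N → q ^ j ∣ N →
      ∀ s s' k k', s < A * B / Nat.gcd A B → s' < A * B / Nat.gcd A B →
        k < Nat.gcd A B → k' < Nat.gcd A B →
        (g : ZMod N) ^ s * (y : ZMod N) ^ k = (g : ZMod N) ^ s' * (y : ZMod N) ^ k' →
        s = s' ∧ k = k' := by
    intro N hPN hQN s s' k k' hs hs' hk hk' heq
    have hP : (g : ZMod (p ^ i)) ^ (s + k) = (g : ZMod (p ^ i)) ^ (s' + k') := by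
      have := congrArg (ZMod.castHom hPN (ZMod (p ^ i))) heq
      simp only [map_mul, map_pow, map_natCast] at this
      rw [hyp] at this
      rw [pow_add, pow_add]
      exact this
    have hQ : (g : ZMod (q ^ j)) ^ s = (g : ZMod (q ^ j)) ^ s' := by
      have := congrArg (ZMod.castHom hQN (ZMod (q ^ j))) heq
      simp only [map_mul, map_pow, map_natCast] at this
      rw [hyq] at this
      simpa using this
    obtain ⟨uP, huP⟩ := hup
    obtain ⟨uQ, huQ⟩ := huq
    have hPu : uP ^ (s + k) = uP ^ (s' + k') := by
      apply Units.ext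
      rw [Units.val_pow_eq_pow_val, Units.val_pow_eq_pow_val, huP]
      exact hP
    have hQu : uQ ^ s = uQ ^ s' := by
      apply Units.ext
      rw [Units.val_pow_eq_pow_val, Units.val_pow_eq_pow_val, huQ]
      exact hQ
    have h1 : s + k ≡ s' + k' [MOD A] := by
      have h := pow_eq_pow_iff_modEq.mp hPu
      rwa [← orderOf_units, huP, hop] at h
    have h2 : s ≡ s' [MOD B] := by
      have h := pow_eq_pow_iff_modEq.mp hQu
      rwa [← orderOf_units, huQ, hoq] at h
    exact uniq_aux hs hs' hk hk' h1 h2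
  -- the main generic statement
  have main : ∀ N : ℕ, 0 < N → p ^ i ∣ N → q ^ j ∣ N → Nat.totient N = A * B →
      Nat.Coprime g N → Nat.Coprime y N →
      (GC0 g y N (A * B / Nat.gcd A B / 2) (Nat.gcd A B)
          ∪ GC1 g y N (A * B / Nat.gcd A B / 2) (Nat.gcd A B)
        = (Finset.range N).filter (fun t => Nat.Coprime t N)) ∧
      Disjoint (GC0 g y N (A * B / Nat.gcd A B / 2) (Nat.gcd A B))
        (GC1 g y N (A * B / Nat.gcd A B / 2) (Nat.gcd A B)) := by
    intro N hN0 hPN hQN htot hgN hyN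
    set e := Nat.gcd A B with hedef
    set d := A * B / e with hddef
    have hedvd : e ∣ A * B := (Nat.gcd_dvd_left A B).mul_right B
    have hde : d * e = A * B := Nat.div_mul_cancel hedvd
    have hdeven : 2 ∣ d := dvd_trans hAeven (Nat.dvd_lcm_left A B)
    have hd2 : 2 * (d / 2) = d := Nat.mul_div_cancel' hdeven
    have inj2 : ∀ s s' k k', s < d → s' < d → k < e → k' < e →
        g ^ s * y ^ k % N = g ^ s' * y ^ k' % N → s = s' ∧ k = k' := by
      intro s s' k k' hs hs' hk hk' hh
      apply keyinj N hPN hQN s s' k k' hs hs' hk hk'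
      have := congrArg (fun t : ℕ => (t : ZMod N)) hh
      simpa [ZMod.natCast_mod, Nat.cast_mul, Nat.cast_pow] using this
    set T := ((Finset.range d) ×ˢ (Finset.range e)).image
        (fun sk : ℕ × ℕ => g ^ sk.1 * y ^ sk.2 % N) with hTdef
    have cardT : T.card = d * e := by
      rw [hTdef, Finset.card_image_of_injOn, Finset.card_product, Finset.card_range,
        Finset.card_range]
      intro a ha b hb hab
      simp only [Finset.mem_coe, Finset.mem_product, Finset.mem_range] at ha hb
      obtain ⟨h1, h2⟩ := inj2 a.1 b.1 a.2 b.2 ha.1 hb.1 ha.2 hb.2 hab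
      exact Prod.ext h1 h2
    have Tsub : T ⊆ (Finset.range N).filter (fun t => Nat.Coprime t N) := by
      intro x hx
      simp only [hTdef, Finset.mem_image, Finset.mem_product, Finset.mem_range,
        Prod.exists] at hx
      obtain ⟨s, k, _, rfl⟩ := hx
      simp only [Finset.mem_filter, Finset.mem_range]
      refine ⟨Nat.mod_lt _ hN0, ?_⟩
      have hc : Nat.Coprime (g ^ s * y ^ k) N := (hgN.pow_left s).mul (hyN.pow_left k)
      have hgg : Nat.gcd N (g ^ s * y ^ k) = 1 := Nat.coprime_comm.mp hc
      rw [Nat.gcd_rec] at hgg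
      exact hgg
    have cardFilter : ((Finset.range N).filter (fun t => Nat.Coprime t N)).card = A * B := by
      have hfc : (Finset.range N).filter (fun t => Nat.Coprime t N)
          = (Finset.range N).filter N.Coprime :=
        Finset.filter_congr (fun x _ => by rw [Nat.coprime_comm])
      rw [hfc, ← htot]
      rfl
    have hTeq : T = (Finset.range N).filter (fun t => Nat.Coprime t N) := by
      apply Finset.eq_of_subset_of_card_le Tsub
      rw [cardFilter, cardT, hde]
    have hmulmod : ∀ x : ℕ, g * (x % N) % N = g * x % N := by
      intro x
      rw [Nat.mul_mod, Nat.mod_mod_of_dvd _ dvd_rfl, ← Nat.mul_mod]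
    have hU : GC0 g y N (d / 2) e ∪ GC1 g y N (d / 2) e = T := by
      ext x
      simp only [GC0, GC1, hTdef, Finset.mem_union, Finset.mem_image, Finset.mem_product,
        Finset.mem_range, Prod.exists]
      constructor
      · rintro (⟨t, k, ⟨ht, hk⟩, rfl⟩ | ⟨x', ⟨t, k, ⟨ht, hk⟩, rfl⟩, rfl⟩)
        · exact ⟨2 * t, k, ⟨by omega, hk⟩, rfl⟩
        · refine ⟨2 * t + 1, k, ⟨by omega, hk⟩, ?_⟩
          rw [hmulmod, ← mul_assoc, ← pow_succ']
      · rintro ⟨s, k, ⟨hs, hk⟩, rfl⟩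
        rcases Nat.even_or_odd s with ⟨t, ht⟩ | ⟨t, ht⟩
        · left
          exact ⟨t, k, ⟨by omega, hk⟩, by rw [show 2 * t = s by omega]⟩
        · right
          refine ⟨g ^ (2 * t) * y ^ k % N, ⟨t, k, ⟨by omega, hk⟩, rfl⟩, ?_⟩
          rw [hmulmod, ← mul_assoc, ← pow_succ', show 2 * t + 1 = s by omega]
    have hdisj : Disjoint (GC0 g y N (d / 2) e) (GC1 g y N (d / 2) e) := by
      rw [Finset.disjoint_left]
      intro x hx0 hx1
      simp only [GC0, GC1, Finset.mem_image, Finset.mem_product, Finset.mem_range,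
        Prod.exists] at hx0 hx1
      obtain ⟨t, k, ⟨ht, hk⟩, hx⟩ := hx0
      obtain ⟨x', ⟨t', k', ⟨ht', hk'⟩, rfl⟩, hx'⟩ := hx1
      have heq : g ^ (2 * t) * y ^ k % N = g ^ (2 * t' + 1) * y ^ k' % N := by
        rw [hx, ← hx', hmulmod, ← mul_assoc, ← pow_succ']
      obtain ⟨h1, -⟩ := inj2 (2 * t) (2 * t' + 1) k k' (by omega) (by omega) hk hk' heq
      omega
    exact ⟨hU.trans hTeq, hdisj⟩
  -- apply to the two moduli
  have hcpq : Nat.Coprime (p ^ i) (q ^ j) := Nat.Coprime.pow _ _ ((Nat.coprime_primes hp hq).mpr hpq)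
  have hoddN : Odd (p ^ i * q ^ j) := (hpodd.pow).mul (hqodd.pow)
  have hN0 : 0 < p ^ i * q ^ j :=
    Nat.mul_pos (pow_pos (by omega) _) (pow_pos (by omega) _)
  have htN1 : Nat.totient (p ^ i * q ^ j) = A * B := by
    rw [Nat.totient_mul hcpq, htp, htq]
  have htN2 : Nat.totient (2 * (p ^ i * q ^ j)) = A * B := by
    rw [Nat.totient_mul (Nat.coprime_two_left.mpr hoddN), Nat.totient_two, one_mul, htN1]
  have hgN1 : Nat.Coprime g (p ^ i * q ^ j) := hgP.mul_right hgQ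
  have hyN1 : Nat.Coprime y (p ^ i * q ^ j) := hyP.mul_right hyQ
  have hgN2 : Nat.Coprime g (2 * (p ^ i * q ^ j)) :=
    (hgodd.coprime_two_right).mul_right hgN1
  have hyN2 : Nat.Coprime y (2 * (p ^ i * q ^ j)) :=
    (hyodd.coprime_two_right).mul_right hyN1
  have hPdvd1 : p ^ i ∣ p ^ i * q ^ j := dvd_mul_right _ _
  have hQdvd1 : q ^ j ∣ p ^ i * q ^ j := dvd_mul_left _ _
  have h1 := main (p ^ i * q ^ j) hN0 hPdvd1 hQdvd1 htN1 hgN1 hyN1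
  have h2 := main (2 * (p ^ i * q ^ j)) (by omega) (hPdvd1.mul_left 2) (hQdvd1.mul_left 2)
    htN2 hgN2 hyN2
  have hDPQ0 : DPQ p q g y 0 i j = GC0 g y (p ^ i * q ^ j) (A * B / Nat.gcd A B / 2)
      (Nat.gcd A B) := rfl
  have hDPQ1 : DPQ p q g y 1 i j = GC1 g y (p ^ i * q ^ j) (A * B / Nat.gcd A B / 2)
      (Nat.gcd A B) := rfl
  have hD2PQ0 : D2PQ p q g y 0 i j = GC0 g y (2 * (p ^ i * q ^ j))
      (A * B / Nat.gcd A B / 2) (Nat.gcd A B) := rfl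
  have hD2PQ1 : D2PQ p q g y 1 i j = GC1 g y (2 * (p ^ i * q ^ j))
      (A * B / Nat.gcd A B / 2) (Nat.gcd A B) := rfl
  rw [hDPQ0, hDPQ1, hD2PQ0, hD2PQ1]
  exact ⟨⟨h1.1, h1.2⟩, ⟨h2.1, h2.2⟩⟩


end
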